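/- For every n ≥ 1 there exist p, p', q, q' ∈ [0,1]^n with ‖p−q‖_2 = ‖p'−q'‖_2 such that ‖Ber(p)−Ber(q)‖_TV / ‖Ber(p')−Ber(q')‖_TV ≥ c√n, where c > 0 is an absolute constant. Specifically, one may take p = (1/n,…,1/n), q = 0, p' = (1/2 + 1/(2n),…), q' = (1/2 − 1/(2n),…). -/

import Mathlib

open Finset

/-- Total variation distance between two distributions on a finite set. -/
noncomputable def tv {Ω : Type*} [Fintype Ω] (P Q : Ω → ℝ) : ℝ :=
  (1/2) * ∑ ω, |P ω - Q ω|

/-- Product Bernoulli distribution on `{0,1}^n` with parameters `p`. -/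
def berProd {n : ℕ} (p : Fin n → ℝ) : (Fin n → Bool) → ℝ :=
  fun ω => ∏ i, if ω i then p i else 1 - p i

lemma berProd_nonneg {n : ℕ} {p : Fin n → ℝ} (hp : ∀ i, p i ∈ Set.Icc (0:ℝ) 1)
    (ω : Fin n → Bool) : 0 ≤ berProd p ω := by
  apply Finset.prod_nonneg
  intro i _
  rcases hp i with ⟨h0, h1⟩
  by_cases h : ω i <;> simp [h, h0, h1, sub_nonneg]

lemma sum_berProd {n : ℕ} (p : Fin n → ℝ) : ∑ ω, berProd p ω = 1 := by
  have := (Fintype.prod_sum (κ := fun _ : Fin n => Bool)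
      (fun i b => if b then p i else 1 - p i)).symm
  calc ∑ ω : Fin n → Bool, berProd p ω
      = ∏ i, ∑ b : Bool, (if b then p i else 1 - p i) := this
    _ = 1 := by simp

/-- Single-point lower bound for total variation. -/
lemma tv_ge_point {Ω : Type*} [Fintype Ω] (P Q : Ω → ℝ) (ω₀ : Ω) :
    (1/2) * |P ω₀ - Q ω₀| ≤ tv P Q := by
  unfold tv
  have h : |P ω₀ - Q ω₀| ≤ ∑ ω, |P ω - Q ω| :=
    Finset.single_le_sum (f := fun ω => |P ω - Q ω|) (fun ω _ => abs_nonneg _) (Finset.mem_univ ω₀)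
  linarith

/-- Hellinger-type upper bound for total variation. -/
lemma tv_le_sqrt {Ω : Type*} [Fintype Ω] (P Q : Ω → ℝ)
    (hP : ∀ ω, 0 ≤ P ω) (hQ : ∀ ω, 0 ≤ Q ω)
    (hPs : ∑ ω, P ω = 1) (hQs : ∑ ω, Q ω = 1) :
    tv P Q ≤ Real.sqrt (1 - (∑ ω, Real.sqrt (P ω * Q ω))^2) := by
  set B := ∑ ω, Real.sqrt (P ω * Q ω) with hB
  have hsum1 : ∑ ω, (Real.sqrt (P ω) - Real.sqrt (Q ω))^2 = 2 - 2*B := by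
    have hpt : ∀ ω : Ω, (Real.sqrt (P ω) - Real.sqrt (Q ω))^2
        = P ω + Q ω - 2 * Real.sqrt (P ω * Q ω) := by
      intro ω
      rw [Real.sqrt_mul (hP ω)]
      nlinarith [Real.sq_sqrt (hP ω), Real.sq_sqrt (hQ ω)]
    rw [Finset.sum_congr rfl (fun ω _ => hpt ω), Finset.sum_sub_distrib,
      Finset.sum_add_distrib, hPs, hQs, ← Finset.mul_sum, ← hB]
    ring
  have hsum2 : ∑ ω, (Real.sqrt (P ω) + Real.sqrt (Q ω))^2 = 2 + 2*B := by
    have hpt : ∀ ω : Ω, (Real.sqrt (P ω) + Real.sqrt (Q ω))^2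
        = P ω + Q ω + 2 * Real.sqrt (P ω * Q ω) := by
      intro ω
      rw [Real.sqrt_mul (hP ω)]
      nlinarith [Real.sq_sqrt (hP ω), Real.sq_sqrt (hQ ω)]
    rw [Finset.sum_congr rfl (fun ω _ => hpt ω), Finset.sum_add_distrib,
      Finset.sum_add_distrib, hPs, hQs, ← Finset.mul_sum, ← hB]
    ring
  have hCS : (∑ ω, |Real.sqrt (P ω) - Real.sqrt (Q ω)| * (Real.sqrt (P ω) + Real.sqrt (Q ω)))^2
      ≤ (∑ ω, |Real.sqrt (P ω) - Real.sqrt (Q ω)|^2) * ∑ ω, (Real.sqrt (P ω) + Real.sqrt (Q ω))^2 := by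
    exact Finset.sum_mul_sq_le_sq_mul_sq _ _ _
  have habs : ∀ ω : Ω, |P ω - Q ω|
      = |Real.sqrt (P ω) - Real.sqrt (Q ω)| * (Real.sqrt (P ω) + Real.sqrt (Q ω)) := by
    intro ω
    have h1 : P ω - Q ω = (Real.sqrt (P ω) - Real.sqrt (Q ω)) * (Real.sqrt (P ω) + Real.sqrt (Q ω)) := by
      nlinarith [Real.sq_sqrt (hP ω), Real.sq_sqrt (hQ ω)]
    rw [h1, abs_mul,
      abs_of_nonneg (show (0:ℝ) ≤ Real.sqrt (P ω) + Real.sqrt (Q ω) by positivity)]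
  have hsq : (∑ ω, |P ω - Q ω|)^2 ≤ (2 - 2*B) * (2 + 2*B) := by
    calc (∑ ω, |P ω - Q ω|)^2
        = (∑ ω, |Real.sqrt (P ω) - Real.sqrt (Q ω)| * (Real.sqrt (P ω) + Real.sqrt (Q ω)))^2 := by
          congr 1; exact Finset.sum_congr rfl (fun ω _ => habs ω)
      _ ≤ (∑ ω, |Real.sqrt (P ω) - Real.sqrt (Q ω)|^2) * ∑ ω, (Real.sqrt (P ω) + Real.sqrt (Q ω))^2 := hCS
      _ = (2 - 2*B) * (2 + 2*B) := by
          rw [← hsum1, ← hsum2]; congr 1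
          exact Finset.sum_congr rfl (fun ω _ => by rw [sq_abs])
  have htv_nonneg : 0 ≤ (1/2) * ∑ ω, |P ω - Q ω| := by
    apply mul_nonneg (by norm_num)
    exact Finset.sum_nonneg (fun ω _ => abs_nonneg _)
  unfold tv
  apply Real.le_sqrt_of_sq_le
  nlinarith [hsq]

lemma pow_le_half {n : ℕ} (hn : 1 ≤ n) : (1 - 1/(n:ℝ))^n ≤ 1/2 := by
  rcases Nat.eq_or_lt_of_le hn with h | h
  · simp [← h]
  · have hnR : (2:ℝ) ≤ n := by exact_mod_cast h
    have hpos : (0:ℝ) < (n:ℝ) - 1 := by linarith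
    have hann : (0:ℝ) ≤ 1/((n:ℝ)-1) := by positivity
    have hbern : 1 + (n:ℝ) * (1/((n:ℝ)-1)) ≤ (1 + 1/((n:ℝ)-1))^n :=
      one_add_mul_le_pow (by linarith) n
    have hna : (1:ℝ) ≤ (n:ℝ) * (1/((n:ℝ)-1)) := by
      rw [mul_one_div]
      exact (one_le_div hpos).mpr (by linarith)
    have h2le : (2:ℝ) ≤ (1 + 1/((n:ℝ)-1))^n := by linarith
    have hmul : (1 - 1/(n:ℝ)) * (1 + 1/((n:ℝ)-1)) = 1 := by
      field_simp
      ring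
    have key : (1 - 1/(n:ℝ))^n * (1 + 1/((n:ℝ)-1))^n = 1 := by
      rw [← mul_pow, hmul, one_pow]
    have hxnn : (0:ℝ) ≤ 1 - 1/(n:ℝ) := by
      rw [sub_nonneg, div_le_one (by linarith)]; linarith
    have hxpnn : (0:ℝ) ≤ (1 - 1/(n:ℝ))^n := pow_nonneg hxnn n
    nlinarith [mul_le_mul_of_nonneg_left h2le hxpnn]

theorem sqrt_n_gap :
    ∃ c : ℝ, c > 0 ∧
      ∀ n : ℕ, n ≥ 1 →
        ∃ p p' q q' : Fin n → ℝ,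
          (∀ i, p i ∈ Set.Icc (0:ℝ) 1) ∧ (∀ i, q i ∈ Set.Icc (0:ℝ) 1) ∧
          (∀ i, p' i ∈ Set.Icc (0:ℝ) 1) ∧ (∀ i, q' i ∈ Set.Icc (0:ℝ) 1) ∧
          Real.sqrt (∑ i, (p i - q i)^2) = Real.sqrt (∑ i, (p' i - q' i)^2) ∧
          tv (berProd p) (berProd q) / tv (berProd p') (berProd q')
            ≥ c * Real.sqrt n := by
  refine ⟨1/4, by norm_num, fun n hn => ?_⟩
  have hnR : (1:ℝ) ≤ (n:ℝ) := by exact_mod_cast hn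
  have hn0 : (0:ℝ) < (n:ℝ) := by linarith
  set ε : ℝ := 1/(2*(n:ℝ)) with hε
  have hε_pos : 0 < ε := by positivity
  have hε_le : ε ≤ 1/2 := by
    rw [hε, div_le_div_iff₀ (by positivity) (by norm_num)]
    linarith
  refine ⟨fun _ => 1/(n:ℝ), fun _ => 1/2 + ε, fun _ => 0, fun _ => 1/2 - ε, ?_, ?_, ?_, ?_, ?_, ?_⟩
  · intro i
    constructor
    · positivity
    · rw [div_le_one hn0]; exact hnR
  · intro i; constructor <;> norm_num
  · intro i; constructor <;> [positivity; linarith]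
  · intro i; constructor <;> [linarith; linarith]
  · congr 1
    apply Finset.sum_congr rfl
    intro i _
    rw [hε]
    field_simp
    ring
  · -- main inequality
    set P := berProd (fun _ : Fin n => 1/(n:ℝ)) with hP
    set Q := berProd (fun _ : Fin n => (0:ℝ)) with hQ
    set P' := berProd (fun _ : Fin n => 1/2 + ε) with hP'
    set Q' := berProd (fun _ : Fin n => 1/2 - ε) with hQ'
    -- numerator lower bound
    have hnum : (1/4 : ℝ) ≤ tv P Q := by
      have h0 : tv P Q ≥ (1/2) * |P (fun _ => false) - Q (fun _ => false)| :=
        tv_ge_point P Q _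
      have hPval : P (fun _ => false) = (1 - 1/(n:ℝ))^n := by
        rw [hP]; unfold berProd; simp
      have hQval : Q (fun _ => false) = 1 := by
        rw [hQ]; unfold berProd; simp
      have hle : (1 - 1/(n:ℝ))^n ≤ 1/2 := pow_le_half hn
      have hge0 : (0:ℝ) ≤ (1 - 1/(n:ℝ))^n := by
        apply pow_nonneg
        rw [sub_nonneg, div_le_one hn0]; exact hnR
      rw [hPval, hQval] at h0
      rw [abs_of_nonpos (by linarith)] at h0
      linarith
    -- denominator upper bound
    have hp'mem : ∀ i : Fin n, (1/2 + ε : ℝ) ∈ Set.Icc (0:ℝ) 1 := by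
      intro i; constructor <;> [positivity; linarith]
    have hq'mem : ∀ i : Fin n, (1/2 - ε : ℝ) ∈ Set.Icc (0:ℝ) 1 := by
      intro i; constructor <;> [linarith; linarith]
    have hP'nn : ∀ ω, 0 ≤ P' ω := berProd_nonneg hp'mem
    have hQ'nn : ∀ ω, 0 ≤ Q' ω := berProd_nonneg hq'mem
    have hP's : ∑ ω, P' ω = 1 := sum_berProd _
    have hQ's : ∑ ω, Q' ω = 1 := sum_berProd _
    -- compute the Bhattacharyya coefficient
    have hprod_const : ∀ ω : Fin n → Bool, P' ω * Q' ω = (1/4 - ε^2)^n := by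
      intro ω
      rw [hP', hQ']
      unfold berProd
      rw [← Finset.prod_mul_distrib]
      rw [Finset.prod_congr rfl (g := fun _ => 1/4 - ε^2) (fun i _ => ?_)]
      · rw [Finset.prod_const, Finset.card_univ, Fintype.card_fin]
      · by_cases h : ω i <;> simp [h] <;> ring
    have hquarter : (0:ℝ) ≤ 1/4 - ε^2 := by nlinarith
    set B := ∑ ω : Fin n → Bool, Real.sqrt (P' ω * Q' ω) with hBdef
    have hBval : B = 2^n * Real.sqrt ((1/4 - ε^2)^n) := by
      rw [hBdef]
      rw [Finset.sum_congr rfl (fun ω _ => by rw [hprod_const ω])]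
      rw [Finset.sum_const, Finset.card_univ]
      simp [Fintype.card_fun]
    have hBsq : B^2 = (1 - 4*ε^2)^n := by
      have h4 : ((2:ℝ)^n)^2 = 4^n := by
        rw [← pow_mul, mul_comm, pow_mul]; norm_num
      rw [hBval, mul_pow, Real.sq_sqrt (pow_nonneg hquarter n), h4, ← mul_pow]
      congr 1
      ring
    have h4eps : 4*ε^2 = 1/(n:ℝ)^2 := by
      rw [hε]; field_simp; ring
    have hBern : 1 - (n:ℝ) * (1/(n:ℝ)^2) ≤ (1 - 1/(n:ℝ)^2)^n := by
      have h := one_add_mul_le_pow (a := -(1/(n:ℝ)^2)) (by nlinarith) n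
      simpa [sub_eq_add_neg, mul_neg] using h
    have h1B : 1 - B^2 ≤ 1/(n:ℝ) := by
      rw [hBsq, h4eps]
      have : (n:ℝ) * (1/(n:ℝ)^2) = 1/(n:ℝ) := by field_simp
      rw [this] at hBern
      linarith
    have hden_le : tv P' Q' ≤ Real.sqrt (1/(n:ℝ)) := by
      calc tv P' Q' ≤ Real.sqrt (1 - B^2) := tv_le_sqrt P' Q' hP'nn hQ'nn hP's hQ's
        _ ≤ Real.sqrt (1/(n:ℝ)) := Real.sqrt_le_sqrt h1B
    -- denominator positive
    have hden_pos : 0 < tv P' Q' := by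
      have h0 : tv P' Q' ≥ (1/2) * |P' (fun _ => true) - Q' (fun _ => true)| :=
        tv_ge_point P' Q' _
      have hPval : P' (fun _ => true) = (1/2 + ε)^n := by
        rw [hP']; unfold berProd; simp
      have hQval : Q' (fun _ => true) = (1/2 - ε)^n := by
        rw [hQ']; unfold berProd; simp
      have hlt : (1/2 - ε)^n < (1/2 + ε)^n := by
        apply pow_lt_pow_left₀ (by linarith) (by linarith)
        omega
      rw [hPval, hQval] at h0
      rw [abs_of_pos (by linarith)] at h0
      linarith
    -- combine
    have hsqrt_pos : 0 < Real.sqrt (n:ℝ) := Real.sqrt_pos.mpr hn0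
    have hsqrt_inv : Real.sqrt (1/(n:ℝ)) = (Real.sqrt (n:ℝ))⁻¹ := by
      rw [one_div, Real.sqrt_inv]
    have key : (1/4 : ℝ) * Real.sqrt n ≤ (1/4) / tv P' Q' := by
      rw [div_eq_mul_inv]
      apply mul_le_mul_of_nonneg_left _ (by norm_num)
      have := Real.sqrt_pos.mpr (show (0:ℝ) < 1/(n:ℝ) by positivity)
      calc Real.sqrt (n:ℝ) = (Real.sqrt (1/(n:ℝ)))⁻¹ := by
            rw [hsqrt_inv, inv_inv]
        _ ≤ (tv P' Q')⁻¹ := by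
            apply inv_anti₀ hden_pos hden_le
    have key2 : (1/4 : ℝ) / tv P' Q' ≤ tv P Q / tv P' Q' := by
      gcongr
    calc tv P Q / tv P' Q' ≥ (1/4) / tv P' Q' := key2
      _ ≥ (1/4) * Real.sqrt n := key
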